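/- There exists an uncountable set S ⊆ [−μν, μν] containing no periodic points of f such that for all p, q ∈ S with p ≠ q, limsup_{n→∞} |fⁿ(p) − fⁿ(q)| > 0 and liminf_{n→∞} |fⁿ(p) − fⁿ(q)| = 0; that is, the interval [−μν, μν] contains chaotic orbits of f in the sense of Li and Yorke. -/

import Mathlib

open Set Filter

/-- The piecewise-linear threshold map `f(1,1,·)` of the chaotic NOR gate. -/
noncomputable def fmap (μ ν : ℝ) : ℝ → ℝ := fun x =>
  if x ≤ -ν then (1 + μ) / (1 - μ) * (x + ν) - μ * ν
  else if x ≤ ν then μ * x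
  else (1 + μ) / (1 - μ) * (x - ν) + μ * ν

namespace LY

noncomputable def rr (μ : ℝ) : ℝ := (1 - μ) / (μ * (1 + μ))
noncomputable def qq (μ : ℝ) : ℝ := (μ - 1) / (μ * (1 + μ))
noncomputable def ee (μ ν : ℝ) : ℝ := ν * (μ^2 + 1) / (μ - 1)
noncomputable def sg : Bool → ℝ := fun b => if b then 1 else -1
noncomputable def pt (μ ν : ℝ) (ω : ℕ → Bool) : ℝ :=
  ee μ ν * ∑' n, sg (ω n) * (rr μ)^(n+1)
def sh (ω : ℕ → Bool) : ℕ → Bool := fun n => ω (n+1)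

variable {μ ν : ℝ}

lemma rr_eq_neg_qq : rr μ = -qq μ := by
  unfold rr qq
  rw [show (1:ℝ) - μ = -(μ - 1) by ring, neg_div]

lemma qq_pos (hμ : 1 < μ) : 0 < qq μ := by
  unfold qq; apply div_pos (by linarith) (by nlinarith)

lemma qq_lt_one (hμ : 1 < μ) : qq μ < 1 := by
  unfold qq
  rw [div_lt_one (by nlinarith)]
  nlinarith

lemma abs_rr (hμ : 1 < μ) : |rr μ| = qq μ := by
  rw [rr_eq_neg_qq, abs_neg, abs_of_pos (qq_pos hμ)]

lemma ee_pos (hμ : 1 < μ) (hν : 0 < ν) : 0 < ee μ ν := by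
  unfold ee; apply div_pos (by nlinarith) (by linarith)

lemma abs_sg (b : Bool) : |sg b| = 1 := by cases b <;> simp [sg]

lemma summ (hμ : 1 < μ) (ω : ℕ → Bool) :
    Summable fun n => sg (ω n) * (rr μ)^(n+1) := by
  apply Summable.of_norm
  have h : (fun n => ‖sg (ω n) * (rr μ)^(n+1)‖) = fun n => |rr μ|^n * |rr μ| := by
    funext n
    rw [Real.norm_eq_abs, abs_mul, abs_sg, one_mul, abs_pow, pow_succ]
  rw [h]
  exact (summable_geometric_of_lt_one (abs_nonneg _)
    (by rw [abs_rr hμ]; exact qq_lt_one hμ)).mul_right _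

lemma qq_geom (hμ : 1 < μ) (hν : 0 < ν) :
    ee μ ν * (qq μ * (1 - qq μ)⁻¹) = ν := by
  have h1 : μ * (1 + μ) ≠ 0 := by nlinarith
  have h2 : (1 : ℝ) - qq μ ≠ 0 := by
    have := qq_lt_one hμ; linarith
  have h3 : μ - 1 ≠ 0 := by linarith
  unfold ee qq at *
  field_simp at h2 ⊢
  ring_nf
  ring_nf at h2
  field_simp
  ring

lemma pt_abs_le (hμ : 1 < μ) (hν : 0 < ν) (ω : ℕ → Bool) : |pt μ ν ω| ≤ ν := by
  have hsum := summ hμ ω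
  have hnorm : ∀ n, ‖sg (ω n) * (rr μ)^(n+1)‖ = qq μ ^ (n+1) := by
    intro n
    rw [Real.norm_eq_abs, abs_mul, abs_sg, one_mul, abs_pow, abs_rr hμ]
  have hs2 : Summable fun n => qq μ ^ (n+1) := by
    have := (summable_geometric_of_lt_one (qq_pos hμ).le (qq_lt_one hμ)).mul_left (qq μ)
    refine this.congr fun n => ?_
    rw [← pow_succ']
  have hbound : |∑' n, sg (ω n) * (rr μ)^(n+1)| ≤ ∑' n, qq μ ^ (n+1) := by
    have := norm_tsum_le_tsum_norm (f := fun n => sg (ω n) * (rr μ)^(n+1))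
      (by rw [funext hnorm]; exact hs2)
    rw [Real.norm_eq_abs] at this
    calc |∑' n, sg (ω n) * (rr μ)^(n+1)| ≤ ∑' n, ‖sg (ω n) * (rr μ)^(n+1)‖ := this
      _ = ∑' n, qq μ ^ (n+1) := by rw [funext hnorm]
  have hgeo : ∑' n, qq μ ^ (n+1) = qq μ * (1 - qq μ)⁻¹ := by
    have h1 : (fun n : ℕ => qq μ ^ (n+1)) = fun n => qq μ * qq μ ^ n := by
      funext n; rw [pow_succ']
    rw [h1, tsum_mul_left, tsum_geometric_of_lt_one (qq_pos hμ).le (qq_lt_one hμ)]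
  rw [pt, abs_mul, abs_of_pos (ee_pos hμ hν)]
  calc ee μ ν * |∑' n, sg (ω n) * (rr μ)^(n+1)|
      ≤ ee μ ν * (qq μ * (1 - qq μ)⁻¹) := by
        rw [← hgeo]; exact mul_le_mul_of_nonneg_left hbound (ee_pos hμ hν).le
    _ = ν := qq_geom hμ hν

lemma pt_rec (hμ : 1 < μ) (ω : ℕ → Bool) :
    pt μ ν ω = rr μ * (ee μ ν * sg (ω 0) + pt μ ν (sh ω)) := by
  have hsum := summ hμ ω
  have h0 : ∑' n, sg (ω n) * (rr μ)^(n+1)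
      = sg (ω 0) * (rr μ)^1 + ∑' n, sg (ω (n+1)) * (rr μ)^(n+2) := by
    rw [Summable.tsum_eq_zero_add hsum]
  have h1 : (fun n => sg (ω (n+1)) * (rr μ)^(n+2))
      = fun n => rr μ * (sg (sh ω n) * (rr μ)^(n+1)) := by
    funext n; unfold sh; ring
  rw [pt, h0, h1, tsum_mul_left, pt]
  ring

lemma qq_ee_bounds (hμ : 1 < μ) (hν : 0 < ν) {P : ℝ} (hP : |P| ≤ ν) :
    ν/μ ≤ qq μ * ee μ ν - qq μ * P ∧ qq μ * ee μ ν - qq μ * P ≤ ν := by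
  obtain ⟨hP1, hP2⟩ := abs_le.1 hP
  have hq := qq_pos hμ
  have hqe : qq μ * (ee μ ν + ν) = ν := by
    have h1 : μ * (1 + μ) ≠ 0 := by nlinarith
    have h3 : μ - 1 ≠ 0 := by linarith
    unfold ee qq
    field_simp
    ring
  constructor
  · have hup : qq μ * P ≤ qq μ * ν := mul_le_mul_of_nonneg_left hP2 hq.le
    have key : ν / μ ≤ qq μ * ee μ ν - qq μ * ν := by
      rw [div_le_iff₀ (by linarith : (0:ℝ) < μ)]
      have hqq : qq μ * (μ * (1 + μ)) = μ - 1 := by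
        unfold qq; field_simp
      nlinarith [sq_nonneg (μ - 1), mul_pos hν (by nlinarith : (0:ℝ) < (μ-1)^2)]
    linarith
  · have hlo : -(qq μ * ν) ≤ qq μ * P := by nlinarith
    linarith

lemma pt_false (hμ : 1 < μ) (hν : 0 < ν) {ω : ℕ → Bool} (h0 : ω 0 = false) :
    ν/μ ≤ pt μ ν ω ∧ pt μ ν ω ≤ ν := by
  have hrec := pt_rec (ν := ν) hμ ω
  rw [h0] at hrec
  have hsg : sg false = -1 := by simp [sg]
  rw [hsg, rr_eq_neg_qq] at hrec
  have hP := pt_abs_le hμ hν (sh ω)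
  have hb := qq_ee_bounds hμ hν hP
  constructor
  · calc ν/μ ≤ qq μ * ee μ ν - qq μ * (pt μ ν (sh ω)) := hb.1
      _ = pt μ ν ω := by rw [hrec]; ring
  · calc pt μ ν ω = qq μ * ee μ ν - qq μ * (pt μ ν (sh ω)) := by rw [hrec]; ring
      _ ≤ ν := hb.2

lemma pt_true (hμ : 1 < μ) (hν : 0 < ν) {ω : ℕ → Bool} (h0 : ω 0 = true) :
    -ν ≤ pt μ ν ω ∧ pt μ ν ω ≤ -(ν/μ) := by
  have hrec := pt_rec (ν := ν) hμ ω
  rw [h0] at hrec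
  have hsg : sg true = 1 := by simp [sg]
  rw [hsg, rr_eq_neg_qq] at hrec
  have hP : |-(pt μ ν (sh ω))| ≤ ν := by rw [abs_neg]; exact pt_abs_le hμ hν (sh ω)
  have hb := qq_ee_bounds hμ hν hP
  constructor
  · have := hb.2
    have heq : pt μ ν ω = -(qq μ * ee μ ν - qq μ * (-(pt μ ν (sh ω)))) := by
      rw [hrec]; ring
    rw [heq]; linarith
  · have := hb.1
    have heq : pt μ ν ω = -(qq μ * ee μ ν - qq μ * (-(pt μ ν (sh ω)))) := by
      rw [hrec]; ring
    rw [heq]; linarith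

lemma pt_sh_eq (hμ : 1 < μ) (ω : ℕ → Bool) :
    pt μ ν (sh ω) = pt μ ν ω / rr μ - ee μ ν * sg (ω 0) := by
  have hrr : rr μ ≠ 0 := by
    rw [rr_eq_neg_qq]; have := qq_pos hμ; intro h; rw [neg_eq_zero] at h; linarith
  have hrec := pt_rec (ν := ν) hμ ω
  field_simp
  linarith [hrec]

lemma alg1 (hμ : 1 < μ) (x : ℝ) :
    (1 + μ) / (1 - μ) * (μ * x - ν) + μ * ν = x / rr μ + ee μ ν := by
  have h1 : (1:ℝ) - μ ≠ 0 := by intro h; nlinarith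
  have h2 : μ - 1 ≠ 0 := by intro h; nlinarith
  have h3 : μ * (1 + μ) ≠ 0 := by nlinarith
  unfold rr ee
  field_simp
  ring

lemma alg2 (hμ : 1 < μ) (x : ℝ) :
    (1 + μ) / (1 - μ) * (μ * x + ν) - μ * ν = x / rr μ - ee μ ν := by
  have h1 : (1:ℝ) - μ ≠ 0 := by intro h; nlinarith
  have h2 : μ - 1 ≠ 0 := by intro h; nlinarith
  have h3 : μ * (1 + μ) ≠ 0 := by nlinarith
  unfold rr ee
  field_simp
  ring

lemma alg_bd (hμ : 1 < μ) (hν : 0 < ν) : (ν/μ) / rr μ + ee μ ν = μ * ν := by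
  have h1 : (1:ℝ) - μ ≠ 0 := by intro h; nlinarith
  have h2 : μ - 1 ≠ 0 := by intro h; nlinarith
  have h3 : μ ≠ 0 := by intro h; nlinarith
  have h4 : (1:ℝ) + μ ≠ 0 := by intro h; nlinarith
  unfold rr ee
  field_simp
  ring

lemma step (hμ : 1 < μ) (hν : 0 < ν) (ω : ℕ → Bool) :
    fmap μ ν (fmap μ ν (pt μ ν ω)) = pt μ ν (sh ω) := by
  have hμ0 : (0:ℝ) < μ := by linarith
  set x := pt μ ν ω with hx
  cases h0 : ω 0 with
  | false =>
    obtain ⟨hx1, hx2⟩ := pt_false hμ hν h0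
    have hxpos : 0 < x := lt_of_lt_of_le (by positivity) hx1
    have hfx : fmap μ ν x = μ * x := by
      unfold fmap
      rw [if_neg (by linarith : ¬ x ≤ -ν), if_pos hx2]
    have hμx : ν ≤ μ * x := by
      calc ν = μ * (ν/μ) := by field_simp
        _ ≤ μ * x := by nlinarith
    have hsh : pt μ ν (sh ω) = x / rr μ + ee μ ν := by
      rw [pt_sh_eq hμ ω, h0]; simp [sg, hx]
    rw [hfx]
    by_cases h3 : μ * x ≤ ν
    · have hxeq : μ * x = ν := le_antisymm h3 hμx
      have hfx2 : fmap μ ν (μ * x) = μ * (μ * x) := by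
        unfold fmap
        rw [if_neg (by linarith : ¬ μ * x ≤ -ν), if_pos h3]
      rw [hfx2, hxeq, hsh]
      have hxv : x = ν / μ := by field_simp; linarith [hxeq]
      rw [hxv, alg_bd hμ hν]
    · have hfx2 : fmap μ ν (μ * x) = (1 + μ) / (1 - μ) * (μ * x - ν) + μ * ν := by
        unfold fmap
        rw [if_neg (by linarith : ¬ μ * x ≤ -ν), if_neg h3]
      rw [hfx2, hsh, alg1 hμ]
  | true =>
    obtain ⟨hx1, hx2⟩ := pt_true hμ hν h0
    have hxneg : x < 0 := lt_of_le_of_lt hx2 (by simp; positivity)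
    have hfx : fmap μ ν x = μ * x := by
      by_cases h1 : x ≤ -ν
      · have hxeq : x = -ν := le_antisymm h1 hx1
        unfold fmap
        rw [if_pos h1, hxeq]
        ring
      · unfold fmap
        rw [if_neg h1, if_pos (by linarith : x ≤ ν)]
    have hμx : μ * x ≤ -ν := by
      calc μ * x ≤ μ * (-(ν/μ)) := by nlinarith
        _ = -ν := by field_simp
    have hsh : pt μ ν (sh ω) = x / rr μ - ee μ ν := by
      rw [pt_sh_eq hμ ω, h0]; simp [sg, hx]
    have hfx2 : fmap μ ν (μ * x) = (1 + μ) / (1 - μ) * (μ * x + ν) - μ * ν := by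
      unfold fmap
      rw [if_pos hμx]
    rw [hfx, hfx2, hsh, alg2 hμ]

lemma sh_iter (ω : ℕ → Bool) : ∀ m n, (sh^[m] ω) n = ω (n + m) := by
  intro m
  induction m generalizing ω with
  | zero => simp
  | succ m ih =>
    intro n
    rw [Function.iterate_succ_apply]
    rw [ih (sh ω) n]
    unfold sh
    congr 1

lemma even_iter (hμ : 1 < μ) (hν : 0 < ν) (ω : ℕ → Bool) :
    ∀ m, (fmap μ ν)^[2*m] (pt μ ν ω) = pt μ ν (sh^[m] ω) := by
  intro m
  induction m with
  | zero => simp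
  | succ m ih =>
    have h2 : 2*(m+1) = 2 + 2*m := by ring
    rw [h2, Function.iterate_add_apply, ih]
    have : (fmap μ ν)^[2] (pt μ ν (sh^[m] ω)) = fmap μ ν (fmap μ ν (pt μ ν (sh^[m] ω))) := by
      rw [show (2:ℕ) = 1 + 1 from rfl, Function.iterate_add_apply]
      simp
    rw [this, step hμ hν]
    congr 1
    exact (Function.iterate_succ_apply' sh m ω).symm

lemma sep (hμ : 1 < μ) (hν : 0 < ν) {ω ω' : ℕ → Bool} (h : ω 0 ≠ ω' 0) :
    2*ν/μ ≤ |pt μ ν ω - pt μ ν ω'| := by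
  have key : ∀ a b : ℕ → Bool, a 0 = false → b 0 = true →
      2*ν/μ ≤ |pt μ ν a - pt μ ν b| := by
    intro a b ha hb
    have h1 := (pt_false hμ hν ha).1
    have h2 := (pt_true hμ hν hb).2
    have : 2*ν/μ ≤ pt μ ν a - pt μ ν b := by
      have : 2*ν/μ = ν/μ + ν/μ := by ring
      linarith
    exact le_trans this (le_abs_self _)
  cases ha : ω 0 <;> cases hb : ω' 0
  · rw [ha, hb] at h; exact absurd rfl h
  · exact key ω ω' ha hb
  · rw [abs_sub_comm]; exact key ω' ω hb ha
  · rw [ha, hb] at h; exact absurd rfl h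

lemma close (hμ : 1 < μ) (hν : 0 < ν) :
    ∀ (K : ℕ) (ω ω' : ℕ → Bool), (∀ i, i < K → ω i = ω' i) →
      |pt μ ν ω - pt μ ν ω'| ≤ 2*ν*(qq μ)^K := by
  intro K
  induction K with
  | zero =>
    intro ω ω' _
    simp only [pow_zero, mul_one]
    have h1 := pt_abs_le hμ hν ω
    have h2 := pt_abs_le hμ hν ω'
    rw [abs_le] at h1 h2
    rw [abs_le]
    constructor <;> linarith
  | succ K ih =>
    intro ω ω' hagree
    have h0 : ω 0 = ω' 0 := hagree 0 (Nat.succ_pos K)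
    have hrec := pt_rec (ν := ν) hμ ω
    have hrec' := pt_rec (ν := ν) hμ ω'
    have hdiff : pt μ ν ω - pt μ ν ω' = rr μ * (pt μ ν (sh ω) - pt μ ν (sh ω')) := by
      rw [hrec, hrec', h0]; ring
    rw [hdiff, abs_mul, abs_rr hμ]
    have hsh : ∀ i, i < K → sh ω i = sh ω' i := by
      intro i hi; unfold sh; exact hagree (i+1) (by omega)
    calc qq μ * |pt μ ν (sh ω) - pt μ ν (sh ω')|
        ≤ qq μ * (2*ν*(qq μ)^K) := by
          exact mul_le_mul_of_nonneg_left (ih _ _ hsh) (qq_pos hμ).le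
      _ = 2*ν*(qq μ)^(K+1) := by ring

lemma pt_ne (hμ : 1 < μ) (hν : 0 < ν) {ω ω' : ℕ → Bool} {m : ℕ} (h : ω m ≠ ω' m) :
    pt μ ν ω ≠ pt μ ν ω' := by
  intro heq
  have h1 : (fmap μ ν)^[2*m] (pt μ ν ω) = (fmap μ ν)^[2*m] (pt μ ν ω') := by rw [heq]
  rw [even_iter hμ hν ω m, even_iter hμ hν ω' m] at h1
  have h0 : (sh^[m] ω) 0 ≠ (sh^[m] ω') 0 := by
    rw [sh_iter ω m 0, sh_iter ω' m 0]
    simpa using h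
  have := sep hμ hν h0
  rw [h1] at this
  simp only [sub_self, abs_zero] at this
  have : (0:ℝ) < 2*ν/μ := by positivity
  linarith

lemma fmap_small (hμ : 1 < μ) (hν : 0 < ν) {y : ℝ} (h : |y| ≤ ν) :
    |fmap μ ν y| ≤ μ * ν := by
  obtain ⟨h1, h2⟩ := abs_le.1 h
  unfold fmap
  by_cases hc1 : y ≤ -ν
  · have hy : y = -ν := le_antisymm hc1 h1
    rw [if_pos hc1, hy]
    have : (1 + μ) / (1 - μ) * (-ν + ν) - μ * ν = -(μ*ν) := by ring
    rw [this, abs_neg, abs_of_pos (by positivity)]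
  · rw [if_neg hc1, if_pos h2, abs_mul, abs_of_pos (by linarith : (0:ℝ) < μ)]
    nlinarith [abs_le.1 h]

lemma orbit_bound (hμ : 1 < μ) (hν : 0 < ν) (ω : ℕ → Bool) (n : ℕ) :
    |(fmap μ ν)^[n] (pt μ ν ω)| ≤ μ * ν := by
  have hνμν : ν ≤ μ * ν := by nlinarith
  rcases Nat.even_or_odd n with ⟨m, hm⟩ | ⟨m, hm⟩
  · rw [hm, show m + m = 2*m by ring, even_iter hμ hν]
    exact le_trans (pt_abs_le hμ hν _) hνμν
  · rw [hm, show 2*m+1 = Nat.succ (2*m) from rfl, Function.iterate_succ_apply',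
      even_iter hμ hν]
    exact fmap_small hμ hν (pt_abs_le hμ hν _)

def code (u : ℕ → Bool) : ℕ → Bool := fun n =>
  if Nat.sqrt n * Nat.sqrt n = n then
    (if Nat.sqrt n % 2 = 0 then true else u (Nat.unpair (Nat.sqrt n / 2)).1)
  else false

lemma code_zero (u : ℕ → Bool) : code u 0 = true := by
  simp [code]

lemma code_nonsquare (u : ℕ → Bool) {k n : ℕ} (h1 : k*k < n) (h2 : n < (k+1)*(k+1)) :
    code u n = false := by
  have hs : Nat.sqrt n = k := by
    have hle : k ≤ Nat.sqrt n := Nat.le_sqrt.2 h1.le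
    have hlt : Nat.sqrt n < k + 1 := Nat.sqrt_lt.2 h2
    omega
  unfold code
  rw [hs, if_neg (by omega)]

lemma code_run (u : ℕ → Bool) {k i : ℕ} (h1 : 1 ≤ i) (h2 : i ≤ 2*k) :
    code u (k*k + i) = false := by
  apply code_nonsquare u (k := k) <;> nlinarith

lemma code_odd_sq (u : ℕ → Bool) (j : ℕ) :
    code u ((2*j+1)*(2*j+1)) = u (Nat.unpair j).1 := by
  have hs : Nat.sqrt ((2*j+1)*(2*j+1)) = 2*j+1 := by
    have := Nat.sqrt_eq' (2*j+1)
    rwa [pow_two] at this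
  unfold code
  rw [hs, if_pos rfl, if_neg (by omega), show (2*j+1)/2 = j by omega]

lemma code_aperiodic (u : ℕ → Bool) {n : ℕ} (hn : 0 < n) :
    ∃ m, code u (m + n) ≠ code u m := by
  by_contra h
  push_neg at h
  have hmul : ∀ j, code u (j*n) = code u 0 := by
    intro j
    induction j with
    | zero => simp
    | succ j ih =>
      have : (j+1)*n = j*n + n := by ring
      rw [this, h (j*n), ih]
  have h1 := hmul (n+1)
  rw [code_zero] at h1
  have h2 : code u ((n+1)*n) = false := by
    have : (n+1)*n = n*n + n := by ring
    rw [this]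
    exact code_run u (by omega) (by omega)
  rw [h2] at h1
  exact Bool.false_ne_true h1

lemma code_diff {u u' : ℕ → Bool} {i : ℕ} (hi : u i ≠ u' i) (N : ℕ) :
    ∃ m, N ≤ m ∧ code u m ≠ code u' m := by
  set j := Nat.pair i N with hj
  refine ⟨(2*j+1)*(2*j+1), ?_, ?_⟩
  · have h1 : N ≤ j := Nat.right_le_pair i N
    nlinarith
  · rw [code_odd_sq u j, code_odd_sq u' j, hj, Nat.unpair_pair]
    exact hi

lemma code_runs (K N : ℕ) :
    ∃ a, N ≤ a ∧ ∀ (u : ℕ → Bool) (i : ℕ), i < K → code u (a + i) = false := by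
  set k := max (K+1) N with hk
  refine ⟨k*k + 1, ?_, ?_⟩
  · have h1 : N ≤ k := le_max_right _ _
    nlinarith
  · intro u i hi
    have : k*k + 1 + i = k*k + (1 + i) := by ring
    rw [this]
    have hK : K + 1 ≤ k := le_max_left _ _
    exact code_run u (by omega) (by omega)

end LY

/-- The interval `[−μν, μν]` contains Li–Yorke chaotic orbits of `f`: there is an
uncountable scrambled set `S ⊆ [−μν, μν]` containing no periodic points. -/
theorem fmap_liYorke_chaos (μ ν : ℝ) (hμ : 1 < μ) (hν : 0 < ν) :
    ∃ S : Set ℝ, S ⊆ Icc (-(μ * ν)) (μ * ν) ∧ ¬ S.Countable ∧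
      (∀ p ∈ S, ¬ ∃ n : ℕ, 0 < n ∧ (fmap μ ν)^[n] p = p) ∧
      ∀ p ∈ S, ∀ q ∈ S, p ≠ q →
        0 < limsup (fun n : ℕ => |(fmap μ ν)^[n] p - (fmap μ ν)^[n] q|) atTop ∧
        liminf (fun n : ℕ => |(fmap μ ν)^[n] p - (fmap μ ν)^[n] q|) atTop = 0 := by
  classical
  set F : (ℕ → Bool) → ℝ := fun u => LY.pt μ ν (LY.code u) with hF
  have hFinj : Function.Injective F := by
    intro u u' huu
    by_contra hne
    obtain ⟨i, hi⟩ := Function.ne_iff.1 hne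
    obtain ⟨m, _, hm⟩ := LY.code_diff hi 0
    exact LY.pt_ne hμ hν hm huu
  refine ⟨Set.range F, ?_, ?_, ?_, ?_⟩
  · rintro p ⟨u, rfl⟩
    have h := abs_le.1 (LY.pt_abs_le hμ hν (LY.code u))
    have hνμν : ν ≤ μ * ν := by nlinarith
    exact ⟨by simpa using by linarith [h.1], by linarith [h.2]⟩
  · intro hc
    have hcnt : Countable (ℕ → Bool) := by
      have h1 : Countable (Set.range F) := hc.to_subtype
      exact Countable.of_equiv _ (Equiv.ofInjective F hFinj).symm
    obtain ⟨g, hg⟩ := exists_injective_nat (ℕ → Bool)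
    set e : Set ℕ → (ℕ → Bool) := fun s n => if n ∈ s then true else false with he
    have he_inj : Function.Injective e := by
      intro s t hst
      ext n
      have h := congrFun hst n
      by_cases hn : n ∈ s <;> by_cases hn' : n ∈ t <;>
        simp [he, hn, hn'] at h ⊢ <;> tauto
    exact Function.cantor_injective (g ∘ e) (hg.comp he_inj)
  · rintro p ⟨u, rfl⟩ ⟨n, hn, hfix⟩
    have h2 : (fmap μ ν)^[2*n] (F u) = F u := by
      rw [show 2*n = n + n by ring, Function.iterate_add_apply, hfix, hfix]
    have h3 : LY.pt μ ν (LY.sh^[n] (LY.code u)) = LY.pt μ ν (LY.code u) := by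
      rw [← LY.even_iter hμ hν (LY.code u) n]
      exact h2
    obtain ⟨m, hm⟩ := LY.code_aperiodic u hn
    refine LY.pt_ne hμ hν (ω := LY.sh^[n] (LY.code u)) (ω' := LY.code u) (m := m) ?_ h3
    rw [LY.sh_iter]
    exact hm
  · rintro p ⟨u, rfl⟩ q ⟨u', rfl⟩ hpq
    have hu : u ≠ u' := fun h => hpq (by rw [h])
    obtain ⟨i, hi⟩ := Function.ne_iff.1 hu
    set val : ℕ → ℝ := fun n => |(fmap μ ν)^[n] (F u) - (fmap μ ν)^[n] (F u')| with hval
    have hb : ∀ n, val n ≤ 2*(μ*ν) := by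
      intro n
      have h1 := abs_le.1 (LY.orbit_bound hμ hν (LY.code u) n)
      have h2 := abs_le.1 (LY.orbit_bound hμ hν (LY.code u') n)
      rw [hval]
      rw [abs_le]
      constructor <;> simp only [F] at h1 h2 ⊢ <;> [linarith [h1.1, h2.2]; linarith [h1.2, h2.1]]
    have hbdd : IsBoundedUnder (· ≤ ·) atTop val := isBoundedUnder_of ⟨2*(μ*ν), hb⟩
    have hbdd0 : IsBoundedUnder (· ≥ ·) atTop val := isBoundedUnder_of ⟨0, fun n => abs_nonneg _⟩
    have heq2 : ∀ m : ℕ, val (2*m) =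
        |LY.pt μ ν (LY.sh^[m] (LY.code u)) - LY.pt μ ν (LY.sh^[m] (LY.code u'))| := by
      intro m
      rw [hval]
      simp only [F]
      rw [LY.even_iter hμ hν, LY.even_iter hμ hν]
    constructor
    · have hfreq : ∃ᶠ n in atTop, 2*ν/μ ≤ val n := by
        rw [frequently_atTop]
        intro N
        obtain ⟨m, hmN, hm⟩ := LY.code_diff hi N
        refine ⟨2*m, by omega, ?_⟩
        rw [heq2 m]
        apply LY.sep hμ hν
        rw [LY.sh_iter, LY.sh_iter]
        simpa using hm
      have hls := le_limsup_of_frequently_le hfreq hbdd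
      have : (0:ℝ) < 2*ν/μ := by positivity
      exact lt_of_lt_of_le this hls
    · have hge : (0:ℝ) ≤ liminf val atTop :=
        le_liminf_of_le hbdd.isCoboundedUnder_ge
          (Eventually.of_forall fun n => abs_nonneg _)
      have hle : ∀ ε : ℝ, 0 < ε → liminf val atTop ≤ ε := by
        intro ε hε
        obtain ⟨K, hK⟩ := exists_pow_lt_of_lt_one
          (show (0:ℝ) < ε/(2*ν) by positivity) (LY.qq_lt_one hμ)
        refine liminf_le_of_frequently_le ?_ hbdd0
        rw [frequently_atTop]
        intro N
        obtain ⟨a, haN, hrun⟩ := LY.code_runs K N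
        refine ⟨2*a, by omega, ?_⟩
        rw [heq2 a]
        have hagree : ∀ j, j < K → (LY.sh^[a] (LY.code u)) j = (LY.sh^[a] (LY.code u')) j := by
          intro j hj
          rw [LY.sh_iter, LY.sh_iter, show j + a = a + j by omega, hrun u j hj, hrun u' j hj]
        have hcl := LY.close hμ hν K _ _ hagree
        have h2ν : 2*ν*(LY.qq μ)^K < ε := by
          rw [show ε = 2*ν*(ε/(2*ν)) by field_simp] 
          have h2νpos : (0:ℝ) < 2*ν := by linarith
          exact mul_lt_mul_of_pos_left hK h2νpos
        linarith
      refine le_antisymm ?_ hge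
      by_contra hcon
      push_neg at hcon
      have := hle (liminf val atTop / 2) (by linarith)
      linarith
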